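/- For every graph G, vc(G) ≤ vc[G] ≤ vc(G)·(vc(G)+1) + 1, where vc[G] is the VC-dimension of the family of closed neighbourhoods of vertices of G, and vc(G) is the size of a largest vertex set A such that for every B ⊆ A there is a vertex v outside A with N(v) ∩ A = B. -/

import Mathlib

/-- The VC-dimension of the family of closed neighbourhoods of `G`: the largest size of a
vertex set `A` such that every `B ⊆ A` equals `N[v] ∩ A` for some vertex `v`. -/
noncomputable def vcClosed (V : Type) [Fintype V] (G : SimpleGraph V) : ℕ :=
  sSup {n | ∃ A : Finset V, A.card = n ∧
    ∀ B : Finset V, B ⊆ A → ∃ v : V, ∀ a ∈ A, (a ∈ B ↔ (a = v ∨ G.Adj v a))}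

/-- The open variant: the largest size of a vertex set `A` such that every `B ⊆ A` equals
`N(v) ∩ A` for some vertex `v` outside `A`. -/
noncomputable def vcOpen (V : Type) [Fintype V] (G : SimpleGraph V) : ℕ :=
  sSup {n | ∃ A : Finset V, A.card = n ∧
    ∀ B : Finset V, B ⊆ A → ∃ v : V, v ∉ A ∧ ∀ a ∈ A, (a ∈ B ↔ G.Adj v a)}

/-- For every graph `G`, `vc(G) ≤ vc[G] ≤ vc(G)·(vc(G)+1) + 1`. -/
theorem vcOpen_le_vcClosed_le (V : Type) [Fintype V] (G : SimpleGraph V) :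
    vcOpen V G ≤ vcClosed V G ∧
    vcClosed V G ≤ vcOpen V G * (vcOpen V G + 1) + 1 := by
  classical
  have bddO : BddAbove {n | ∃ A : Finset V, A.card = n ∧
      ∀ B : Finset V, B ⊆ A → ∃ v : V, v ∉ A ∧ ∀ a ∈ A, (a ∈ B ↔ G.Adj v a)} := by
    refine ⟨Fintype.card V, ?_⟩
    rintro n ⟨A, hA, -⟩
    exact hA ▸ A.card_le_univ
  have bddC : BddAbove {n | ∃ A : Finset V, A.card = n ∧
      ∀ B : Finset V, B ⊆ A → ∃ v : V, ∀ a ∈ A, (a ∈ B ↔ (a = v ∨ G.Adj v a))} := by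
    refine ⟨Fintype.card V, ?_⟩
    rintro n ⟨A, hA, -⟩
    exact hA ▸ A.card_le_univ
  constructor
  · refine csSup_le' ?_
    rintro n ⟨A, hA, hsh⟩
    refine le_csSup bddC ⟨A, hA, ?_⟩
    intro B hB
    obtain ⟨v, hv, hvB⟩ := hsh B hB
    refine ⟨v, fun a ha => ?_⟩
    rw [hvB a ha]
    constructor
    · exact Or.inr
    · rintro (rfl | h)
      · exact absurd ha hv
      · exact h
  · refine csSup_le' ?_
    rintro n ⟨A, hA, hsh⟩
    set d := vcOpen V G with hd
    by_contra hlt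
    push_neg at hlt
    have hn2 : d * d + d + 2 ≤ n := by nlinarith
    have hcard : d + 1 ≤ A.card := by rw [hA]; nlinarith
    obtain ⟨A', hA'sub, hA'card⟩ := A.exists_subset_card_eq hcard
    -- show d+1 is openly shattered
    have hkey : ∀ B : Finset V, B ⊆ A' → ∃ v : V, v ∉ A' ∧ ∀ a ∈ A', (a ∈ B ↔ G.Adj v a) := by
      intro B hB
      -- count subsets of A \ A'
      have hm : d * d + 1 ≤ (A \ A').card := by
        rw [Finset.card_sdiff_of_subset hA'sub, hA, hA'card]
        exact Nat.le_sub_of_add_le (by linarith)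
      set f : V → Finset V := fun b => (A.filter (fun a => a = b ∨ G.Adj b a)) \ A' with hf
      have himg : (B.image f).card < ((A \ A').powerset).card := by
        have h1 : (B.image f).card ≤ d + 1 := by
          calc (B.image f).card ≤ B.card := Finset.card_image_le
            _ ≤ A'.card := Finset.card_le_card hB
            _ = d + 1 := hA'card
        have h2 : d + 1 < 2 ^ (d * d + 1) := by
          have hdd : d + 1 ≤ d * d + 1 := by nlinarith
          calc d + 1 < 2 ^ (d + 1) := Nat.lt_two_pow_self
            _ ≤ 2 ^ (d * d + 1) := Nat.pow_le_pow_right (by norm_num) hdd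
        have h3 : 2 ^ (d * d + 1) ≤ ((A \ A').powerset).card := by
          rw [Finset.card_powerset]
          exact Nat.pow_le_pow_right (by norm_num) hm
        exact lt_of_le_of_lt h1 (lt_of_lt_of_le h2 h3)
      have : ¬ ((A \ A').powerset ⊆ B.image f) := by
        intro hsubs
        exact absurd (Finset.card_le_card hsubs) (not_le.mpr himg)
      rw [Finset.not_subset] at this
      obtain ⟨X, hXpw, hXimg⟩ := this
      rw [Finset.mem_powerset] at hXpw
      have hXA : X ⊆ A := hXpw.trans (Finset.sdiff_subset)
      have hXA' : ∀ x ∈ X, x ∉ A' := fun x hx => (Finset.mem_sdiff.mp (hXpw hx)).2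
      have hC : B ∪ X ⊆ A := Finset.union_subset (hB.trans hA'sub) hXA
      obtain ⟨v, hv⟩ := hsh (B ∪ X) hC
      have hvA' : v ∉ A' := by
        intro hvA'
        have hvA : v ∈ A := hA'sub hvA'
        have hvC : v ∈ B ∪ X := (hv v hvA).mpr (Or.inl rfl)
        have hvB : v ∈ B := by
          rcases Finset.mem_union.mp hvC with h | h
          · exact h
          · exact absurd hvA' (hXA' v h)
        apply hXimg
        rw [Finset.mem_image]
        refine ⟨v, hvB, ?_⟩
        rw [hf]
        ext x
        simp only [Finset.mem_sdiff, Finset.mem_filter]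
        constructor
        · rintro ⟨⟨hxA, hx⟩, hxA'⟩
          have hxC : x ∈ B ∪ X := (hv x hxA).mpr (by tauto)
          rcases Finset.mem_union.mp hxC with h | h
          · exact absurd (hB h) hxA'
          · exact h
        · intro hxX
          have hxA : x ∈ A := hXA hxX
          have hxC : x ∈ B ∪ X := Finset.mem_union_right _ hxX
          have := (hv x hxA).mp hxC
          exact ⟨⟨hxA, by tauto⟩, hXA' x hxX⟩
      refine ⟨v, hvA', fun a ha => ?_⟩
      have haA : a ∈ A := hA'sub ha
      have hane : a ≠ v := fun h => hvA' (h ▸ ha)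
      constructor
      · intro haB
        have := (hv a haA).mp (Finset.mem_union_left _ haB)
        tauto
      · intro hadj
        have haC := (hv a haA).mpr (Or.inr hadj)
        rcases Finset.mem_union.mp haC with h | h
        · exact h
        · exact absurd ha (by exact fun _ => hXA' a h ha)
    have hmem : d + 1 ≤ d := le_csSup bddO ⟨A', hA'card, hkey⟩
    omega
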